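/- Let l > 0, let τ : [0,l] → ℝ be continuously differentiable with τ(0) = 0, let P₁ : [0,l] → ℝ be continuous, and let P : [0,l] × [0,l] → ℝ be continuous such that for every fixed x ∈ [0,l] the function z ↦ P(x,z) is differentiable with ∂P/∂z(x,z) = −P₁(x)·P₁(z). Then ∫_0^l τ(x) ( ∫_0^x τ'(z) P(x,z) dz ) dx = ∫_0^l τ(x)² P(x,x) dx + (1/2) ( ∫_0^l τ(z) P₁(z) dz )². -/

import Mathlib

open Real Set intervalIntegral

/-- Integration-by-parts identity for a multiplicative kernel
(`∂P/∂z(x,z) = -P₁(x)P₁(z)`): for `τ ∈ C¹[0,l]` with `τ(0) = 0`,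
`∫_0^l τ(x)(∫_0^x τ'(z)P(x,z)dz)dx = ∫_0^l τ(x)²P(x,x)dx + (1/2)(∫_0^l τP₁)²`. -/
theorem energy_integral_kernel_P
    (l : ℝ) (hl : 0 < l)
    (τ τ' : ℝ → ℝ)
    (hτ' : ∀ x ∈ Icc (0 : ℝ) l, HasDerivWithinAt τ (τ' x) (Icc 0 l) x)
    (hτ'cont : ContinuousOn τ' (Icc 0 l))
    (h0 : τ 0 = 0)
    (P₁ : ℝ → ℝ) (hP₁ : ContinuousOn P₁ (Icc 0 l))
    (P : ℝ → ℝ → ℝ)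
    (hPcont : ContinuousOn (fun p : ℝ × ℝ => P p.1 p.2) (Icc 0 l ×ˢ Icc 0 l))
    (hPz : ∀ x ∈ Icc (0 : ℝ) l, ∀ z ∈ Icc (0 : ℝ) l,
      HasDerivWithinAt (fun z' => P x z') (-(P₁ x * P₁ z)) (Icc 0 l) z) :
    ∫ x in (0 : ℝ)..l, τ x * ∫ z in (0 : ℝ)..x, τ' z * P x z =
      (∫ x in (0 : ℝ)..l, (τ x) ^ 2 * P x x) +
        (1 / 2) * (∫ z in (0 : ℝ)..l, τ z * P₁ z) ^ 2 := by
  have hl' : (0 : ℝ) ≤ l := hl.le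
  have h0l : (0 : ℝ) ∈ Icc (0 : ℝ) l := ⟨le_rfl, hl'⟩
  have hτc : ContinuousOn τ (Icc 0 l) := fun x hx => (hτ' x hx).continuousWithinAt
  set f : ℝ → ℝ := fun z => τ z * P₁ z with hfdef
  have hfc : ContinuousOn f (Icc 0 l) := hτc.mul hP₁
  set Φ : ℝ → ℝ := fun x => ∫ z in (0 : ℝ)..x, f z with hΦdef
  have hΦ0 : Φ 0 = 0 := by simp [hΦdef]
  -- continuity of z ↦ P x z
  have hPxc : ∀ x ∈ Icc (0 : ℝ) l, ContinuousOn (fun z => P x z) (Icc 0 l) := by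
    intro x hx
    have : ContinuousOn (fun z : ℝ => ((x, z) : ℝ × ℝ)) (Icc 0 l) :=
      (Continuous.prodMk_right x).continuousOn
    exact hPcont.comp this (fun z hz => ⟨hx, hz⟩)
  -- continuity of the diagonal x ↦ P x x
  have hPdiag : ContinuousOn (fun x => P x x) (Icc 0 l) := by
    have : ContinuousOn (fun x : ℝ => ((x, x) : ℝ × ℝ)) (Icc 0 l) :=
      (continuous_id.prodMk continuous_id).continuousOn
    exact hPcont.comp this (fun x hx => ⟨hx, hx⟩)
  have hΦcont : ContinuousOn Φ (Icc 0 l) := by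
    have := intervalIntegral.continuousOn_primitive_interval
      (f := f) (a := (0:ℝ)) (b := l) (μ := MeasureTheory.volume)
      ((hfc.mono (by rw [uIcc_of_le hl'])).integrableOn_compact (by
          rw [uIcc_of_le hl']; exact isCompact_Icc))
    rwa [uIcc_of_le hl'] at this
  -- Step A : inner integration by parts
  have stepA : ∀ x ∈ Icc (0 : ℝ) l,
      (∫ z in (0 : ℝ)..x, τ' z * P x z) = τ x * P x x + P₁ x * Φ x := by
    intro x hx
    obtain ⟨hx0, hxl⟩ := hx
    have hsub : Icc (0 : ℝ) x ⊆ Icc 0 l := Icc_subset_Icc le_rfl hxl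
    have hc1 : ContinuousOn (fun z => τ' z * P x z) (Icc 0 x) :=
      (hτ'cont.mono hsub).mul ((hPxc x ⟨hx0, hxl⟩).mono hsub)
    have hint1 : IntervalIntegrable (fun z => τ' z * P x z) MeasureTheory.volume 0 x := by
      apply ContinuousOn.intervalIntegrable
      rwa [uIcc_of_le hx0]
    have hc2 : ContinuousOn (fun z => τ z * (P₁ x * P₁ z)) (Icc 0 x) :=
      (hτc.mono hsub).mul (continuousOn_const.mul (hP₁.mono hsub))
    have hint2 : IntervalIntegrable (fun z => τ z * (P₁ x * P₁ z)) MeasureTheory.volume 0 x := by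
      apply ContinuousOn.intervalIntegrable
      rwa [uIcc_of_le hx0]
    have key : (∫ z in (0 : ℝ)..x, (τ' z * P x z - τ z * (P₁ x * P₁ z)))
        = τ x * P x x - τ 0 * P x 0 := by
      apply intervalIntegral.integral_eq_sub_of_hasDeriv_right_of_le hx0
        (f := fun z => τ z * P x z)
        (f' := fun z => τ' z * P x z - τ z * (P₁ x * P₁ z))
      · exact (hτc.mono hsub).mul ((hPxc x ⟨hx0, hxl⟩).mono hsub)
      · intro t ht
        have htl : t < l := lt_of_lt_of_le ht.2 hxl
        have htmem : t ∈ Icc (0 : ℝ) l := ⟨ht.1.le, htl.le⟩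
        have hnhds : Icc (0 : ℝ) l ∈ nhds t := Icc_mem_nhds ht.1 htl
        have h1 : HasDerivAt τ (τ' t) t := (hτ' t htmem).hasDerivAt hnhds
        have h2 : HasDerivAt (fun z => P x z) (-(P₁ x * P₁ t)) t :=
          (hPz x ⟨hx0, hxl⟩ t htmem).hasDerivAt hnhds
        have h3 : HasDerivAt (fun z => τ z * P x z)
            (τ' t * P x t - τ t * (P₁ x * P₁ t)) t := by
          have : HasDerivAt (fun z => τ z * P x z) (τ' t * P x t + τ t * -(P₁ x * P₁ t)) t := h1.mul h2
          convert this using 1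
          ring
        exact h3.hasDerivWithinAt
      · exact hint1.sub hint2
    have hsplit : (∫ z in (0 : ℝ)..x, τ' z * P x z)
        = (∫ z in (0 : ℝ)..x, (τ' z * P x z - τ z * (P₁ x * P₁ z)))
          + ∫ z in (0 : ℝ)..x, τ z * (P₁ x * P₁ z) := by
      rw [intervalIntegral.integral_sub hint1 hint2]; ring
    have hmul : (∫ z in (0 : ℝ)..x, τ z * (P₁ x * P₁ z)) = P₁ x * Φ x := by
      rw [hΦdef]
      rw [← intervalIntegral.integral_const_mul]
      apply intervalIntegral.integral_congr
      intro z _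
      simp only [hfdef]
      ring
    rw [hsplit, key, hmul, h0]
    ring
  -- rewrite the outer integrand
  have hcongr : (∫ x in (0 : ℝ)..l, τ x * ∫ z in (0 : ℝ)..x, τ' z * P x z)
      = ∫ x in (0 : ℝ)..l, ((τ x) ^ 2 * P x x + τ x * P₁ x * Φ x) := by
    apply intervalIntegral.integral_congr
    intro x hx
    rw [uIcc_of_le hl'] at hx
    simp only
    rw [stepA x hx]
    ring
  have hint3 : IntervalIntegrable (fun x => (τ x) ^ 2 * P x x) MeasureTheory.volume 0 l := by
    apply ContinuousOn.intervalIntegrable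
    rw [uIcc_of_le hl']
    exact (hτc.pow 2).mul hPdiag
  have hint4 : IntervalIntegrable (fun x => τ x * P₁ x * Φ x) MeasureTheory.volume 0 l := by
    apply ContinuousOn.intervalIntegrable
    rw [uIcc_of_le hl']
    exact (hτc.mul hP₁).mul hΦcont
  -- Step B : ∫ τ P₁ Φ = Φ l ^ 2 / 2
  have stepB : (∫ x in (0 : ℝ)..l, τ x * P₁ x * Φ x) = Φ l ^ 2 / 2 := by
    have key : (∫ x in (0 : ℝ)..l, τ x * P₁ x * Φ x)
        = Φ l ^ 2 / 2 - Φ 0 ^ 2 / 2 := by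
      apply intervalIntegral.integral_eq_sub_of_hasDeriv_right_of_le hl'
        (f := fun x => Φ x ^ 2 / 2)
      · exact (hΦcont.pow 2).div_const 2
      · intro t ht
        have htmem : t ∈ Icc (0 : ℝ) l := ⟨ht.1.le, ht.2.le⟩
        have hnhds : Icc (0 : ℝ) l ∈ nhds t := Icc_mem_nhds ht.1 ht.2
        have hfct : ContinuousAt f t := (hfc t htmem).continuousAt hnhds
        have hfint : IntervalIntegrable f MeasureTheory.volume 0 t := by
          apply ContinuousOn.intervalIntegrable
          rw [uIcc_of_le ht.1.le]
          exact hfc.mono (Icc_subset_Icc le_rfl ht.2.le)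
        have hmeas : StronglyMeasurableAtFilter f (nhds t) :=
          ⟨Icc 0 l, hnhds, (hfc.mono (subset_refl _)).aestronglyMeasurable measurableSet_Icc⟩
        have hΦd : HasDerivAt Φ (f t) t :=
          intervalIntegral.integral_hasDerivAt_right hfint hmeas hfct
        have hd : HasDerivAt (fun x => Φ x ^ 2 / 2) (τ t * P₁ t * Φ t) t := by
          have : HasDerivAt (fun x => Φ x ^ 2 / 2) ((2:ℕ) * Φ t ^ (2 - 1) * f t / 2) t := (hΦd.pow 2).div_const 2
          convert this using 1
          simp only [hfdef]
          ring
        exact hd.hasDerivWithinAt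
      · exact hint4
    rw [key, hΦ0]
    ring
  rw [hcongr, intervalIntegral.integral_add hint3 hint4, stepB]
  have : Φ l = ∫ z in (0 : ℝ)..l, τ z * P₁ z := rfl
  rw [this]
  ring
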